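/- (Lemma 2, forward direction) Let T = F_1 ⋯ F_m be the grammar parsing of T with respect to some straight-line program G producing T. Then: (i) for each factor F_k with |F_k| > 1 there exist indices i_k < j_k < k such that F_k = F_{i_k} ⋯ F_{j_k} (as a substring of T, i.e., the occurrence of F_k equals the concatenation of factors i_k through j_k occurring earlier in the factorization); and (ii) for any two factors F_x, F_y of length greater than 1 with associated index intervals [i_x..j_x] and [i_y..j_y], these two intervals are either disjoint or one is contained in the other. -/

import Mathlib

/-- A straight-line program: a grammar in Chomsky normal form with nonterminals `0, …, g-1`,
a start symbol, and exactly one production per nonterminal, either `X → c` (a terminal) or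
`X → Y Z` with `Y, Z` strictly smaller nonterminals (which makes the grammar acyclic, so that
each nonterminal derives a unique string). -/
structure SLP (α : Type*) where
  /-- the number of nonterminals (= number of productions = size of the SLP) -/
  g : ℕ
  /-- the start symbol -/
  start : Fin g
  /-- the unique production of each nonterminal -/
  rule : Fin g → α ⊕ (Fin g × Fin g)
  /-- binary rules refer to strictly smaller nonterminals -/
  wf : ∀ i j k, rule i = Sum.inr (j, k) → j < i ∧ k < i

namespace SLP

variable {α : Type*}

/-- The string derived from nonterminal `i`. -/
def expand (G : SLP α) (i : Fin G.g) : List α :=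
  match h : G.rule i with
  | Sum.inl c => [c]
  | Sum.inr (j, k) => G.expand j ++ G.expand k
termination_by i.val
decreasing_by
  · exact (G.wf i j k h).1
  · exact (G.wf i j k h).2

/-- `G` produces the string `T`. -/
def Produces (G : SLP α) (T : List α) : Prop := G.expand G.start = T

/-- The size of an SLP: its number of productions. -/
def size (G : SLP α) : ℕ := G.g

/-- Pre-order traversal of the parse tree computing the leaves of the *partial parse tree*:
a node labeled by a nonterminal with a binary rule is internal only at its leftmost (first in
pre-order) occurrence; all later occurrences become leaves. `seen` is the set of binary
nonterminals already expanded to the left; the function returns the factors contributed by the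
subtree rooted at `i` together with the updated set. -/
def visit (G : SLP α) (i : Fin G.g) (seen : Finset (Fin G.g)) :
    List (List α) × Finset (Fin G.g) :=
  match h : G.rule i with
  | Sum.inl _ => ([G.expand i], seen)
  | Sum.inr (j, k) =>
    if i ∈ seen then ([G.expand i], seen)
    else
      let r₁ := G.visit j (insert i seen)
      let r₂ := G.visit k r₁.2
      (r₁.1 ++ r₂.1, r₂.2)
termination_by i.val
decreasing_by
  · exact (G.wf i j k h).1
  · exact (G.wf i j k h).2

/-- The grammar parsing of the produced string with respect to `G`: the factorization given by
the leaves of the partial parse tree, read left to right. -/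
def grammarParsing (G : SLP α) : List (List α) := (G.visit G.start ∅).1

/-- Nonterminal `i` is used, i.e., reachable from the start symbol. -/
inductive Reachable (G : SLP α) : Fin G.g → Prop
  | start : G.Reachable G.start
  | left {i j k} : G.Reachable i → G.rule i = Sum.inr (j, k) → G.Reachable j
  | right {i j k} : G.Reachable i → G.rule i = Sum.inr (j, k) → G.Reachable k

end SLP

variable {α : Type*}

namespace SLP
variable {α : Type*}

theorem expand_inl (G : SLP α) {i : Fin G.g} {c : α} (h : G.rule i = Sum.inl c) :
    G.expand i = [c] := by
  rw [SLP.expand.eq_def]; split <;> simp_all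

theorem expand_inr (G : SLP α) {i j k : Fin G.g} (h : G.rule i = Sum.inr (j, k)) :
    G.expand i = G.expand j ++ G.expand k := by
  rw [SLP.expand.eq_def]; split <;> simp_all

theorem expand_ne_nil (G : SLP α) (i : Fin G.g) : G.expand i ≠ [] := by
  rcases h : G.rule i with c | ⟨j, k⟩
  · simp [expand_inl G h]
  · have := expand_ne_nil G j
    simp [expand_inr G h, this]
termination_by i.val
decreasing_by exact (G.wf _ _ _ h).1

theorem visit_inl (G : SLP α) {i : Fin G.g} {c : α} (h : G.rule i = Sum.inl c)
    (seen : Finset (Fin G.g)) : G.visit i seen = ([G.expand i], seen) := by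
  rw [SLP.visit.eq_def]; split <;> simp_all

theorem visit_mem (G : SLP α) {i j k : Fin G.g} (h : G.rule i = Sum.inr (j, k))
    (seen : Finset (Fin G.g)) (hs : i ∈ seen) : G.visit i seen = ([G.expand i], seen) := by
  rw [SLP.visit.eq_def]; split <;> simp_all

theorem visit_not_mem (G : SLP α) {i j k : Fin G.g} (h : G.rule i = Sum.inr (j, k))
    (seen : Finset (Fin G.g)) (hs : i ∉ seen) : G.visit i seen =
      ((G.visit j (insert i seen)).1 ++ (G.visit k (G.visit j (insert i seen)).2).1,
       (G.visit k (G.visit j (insert i seen)).2).2) := by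
  rw [SLP.visit.eq_def]; split <;> simp_all

/-- Specification of a leaf step of the traversal. -/
theorem leaf_spec (G : SLP α) (i : Fin G.g) (seen done : Finset (Fin G.g))
    (acc : List (List α)) (intv : Fin G.g → ℕ × ℕ)
    (H1 : done ⊆ seen)
    (H3 : ∀ x ∈ done, (intv x).1 < (intv x).2 ∧ (intv x).2 < acc.length ∧
      ((acc.take ((intv x).2 + 1)).drop (intv x).1).flatten = G.expand x)
    (H4 : ∀ x ∈ done, ∀ y ∈ done,
      ((intv x).2 < (intv y).1 ∨ (intv y).2 < (intv x).1) ∨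
      ((intv x).1 ≤ (intv y).1 ∧ (intv y).2 ≤ (intv x).2) ∨
      ((intv y).1 ≤ (intv x).1 ∧ (intv x).2 ≤ (intv y).2))
    (H5 : ∀ (k : ℕ) (hk : k < acc.length), 1 < acc[k].length →
      ∃ x ∈ done, acc[k] = G.expand x ∧ (intv x).2 < k)
    (hv : G.visit i seen = ([G.expand i], seen))
    (hnew : 1 < (G.expand i).length →
      ∃ x ∈ done, G.expand i = G.expand x ∧ (intv x).2 < acc.length) :
    ∃ (done' : Finset (Fin G.g)) (intv' : Fin G.g → ℕ × ℕ),
      done ⊆ done' ∧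
      done' ⊆ (G.visit i seen).2 ∧
      (∀ x ∈ (G.visit i seen).2, x ∈ done' ∨ (x ∈ seen ∧ x ∉ done)) ∧
      seen ⊆ (G.visit i seen).2 ∧
      (∀ x ∈ done, intv' x = intv x) ∧
      (∀ x ∈ done', x ∈ done ∨ x ∉ seen) ∧
      (∀ x ∈ done', x ∉ done → acc.length ≤ (intv' x).1) ∧
      (G.visit i seen).1 ≠ [] ∧
      (G.visit i seen).1.flatten = G.expand i ∧
      (∀ x ∈ done', (intv' x).1 < (intv' x).2 ∧
        (intv' x).2 < (acc ++ (G.visit i seen).1).length ∧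
        (((acc ++ (G.visit i seen).1).take ((intv' x).2 + 1)).drop (intv' x).1).flatten
          = G.expand x) ∧
      (∀ x ∈ done', ∀ y ∈ done',
        ((intv' x).2 < (intv' y).1 ∨ (intv' y).2 < (intv' x).1) ∨
        ((intv' x).1 ≤ (intv' y).1 ∧ (intv' y).2 ≤ (intv' x).2) ∨
        ((intv' y).1 ≤ (intv' x).1 ∧ (intv' x).2 ≤ (intv' y).2)) ∧
      (∀ (k : ℕ) (hk : k < (acc ++ (G.visit i seen).1).length),
        1 < (acc ++ (G.visit i seen).1)[k].length →
        ∃ x ∈ done', (acc ++ (G.visit i seen).1)[k] = G.expand x ∧ (intv' x).2 < k) := by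
  classical
  rw [hv]
  dsimp only
  refine ⟨done, intv, Finset.Subset.refl _, H1, ?_, Finset.Subset.refl _,
    fun _ _ => rfl, fun x hx => Or.inl hx, fun x hx hx' => absurd hx hx',
    by simp, by simp, ?_, H4, ?_⟩
  · intro x hx
    by_cases hd : x ∈ done
    · exact Or.inl hd
    · exact Or.inr ⟨hx, hd⟩
  · intro x hx
    obtain ⟨hab, hbl, hfl⟩ := H3 x hx
    refine ⟨hab, by simp; omega, ?_⟩
    rw [List.take_append_of_le_length (by omega), hfl]
  · intro k hk hlong
    rcases Nat.lt_or_ge k acc.length with hlt | hge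
    · rw [List.getElem_append_left hlt] at hlong ⊢
      exact H5 k hlt hlong
    · have hk' : k = acc.length := by simp at hk; omega
      subst hk'
      rw [List.getElem_concat_length rfl] at hlong ⊢
      obtain ⟨x, hxd, heq, hlt⟩ := hnew hlong
      exact ⟨x, hxd, heq, hlt⟩

/-- Main invariant lemma for the traversal. -/
theorem visit_spec (G : SLP α) (i : Fin G.g) (seen done : Finset (Fin G.g))
    (acc : List (List α)) (intv : Fin G.g → ℕ × ℕ)
    (H1 : done ⊆ seen)
    (H2 : ∀ x ∈ seen, x ∈ done ∨ i < x)
    (H3 : ∀ x ∈ done, (intv x).1 < (intv x).2 ∧ (intv x).2 < acc.length ∧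
      ((acc.take ((intv x).2 + 1)).drop (intv x).1).flatten = G.expand x)
    (H4 : ∀ x ∈ done, ∀ y ∈ done,
      ((intv x).2 < (intv y).1 ∨ (intv y).2 < (intv x).1) ∨
      ((intv x).1 ≤ (intv y).1 ∧ (intv y).2 ≤ (intv x).2) ∨
      ((intv y).1 ≤ (intv x).1 ∧ (intv x).2 ≤ (intv y).2))
    (H5 : ∀ (k : ℕ) (hk : k < acc.length), 1 < acc[k].length →
      ∃ x ∈ done, acc[k] = G.expand x ∧ (intv x).2 < k) :
    ∃ (done' : Finset (Fin G.g)) (intv' : Fin G.g → ℕ × ℕ),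
      done ⊆ done' ∧
      done' ⊆ (G.visit i seen).2 ∧
      (∀ x ∈ (G.visit i seen).2, x ∈ done' ∨ (x ∈ seen ∧ x ∉ done)) ∧
      seen ⊆ (G.visit i seen).2 ∧
      (∀ x ∈ done, intv' x = intv x) ∧
      (∀ x ∈ done', x ∈ done ∨ x ∉ seen) ∧
      (∀ x ∈ done', x ∉ done → acc.length ≤ (intv' x).1) ∧
      (G.visit i seen).1 ≠ [] ∧
      (G.visit i seen).1.flatten = G.expand i ∧
      (∀ x ∈ done', (intv' x).1 < (intv' x).2 ∧
        (intv' x).2 < (acc ++ (G.visit i seen).1).length ∧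
        (((acc ++ (G.visit i seen).1).take ((intv' x).2 + 1)).drop (intv' x).1).flatten
          = G.expand x) ∧
      (∀ x ∈ done', ∀ y ∈ done',
        ((intv' x).2 < (intv' y).1 ∨ (intv' y).2 < (intv' x).1) ∨
        ((intv' x).1 ≤ (intv' y).1 ∧ (intv' y).2 ≤ (intv' x).2) ∨
        ((intv' y).1 ≤ (intv' x).1 ∧ (intv' x).2 ≤ (intv' y).2)) ∧
      (∀ (k : ℕ) (hk : k < (acc ++ (G.visit i seen).1).length),
        1 < (acc ++ (G.visit i seen).1)[k].length →
        ∃ x ∈ done', (acc ++ (G.visit i seen).1)[k] = G.expand x ∧ (intv' x).2 < k) := by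
  classical
  rcases h : G.rule i with c | ⟨j, k⟩
  · refine leaf_spec G i seen done acc intv H1 H3 H4 H5 (visit_inl G h seen) ?_
    rw [expand_inl G h]
    intro hlong
    simp at hlong
  · by_cases hs : i ∈ seen
    · refine leaf_spec G i seen done acc intv H1 H3 H4 H5 (visit_mem G h seen hs) ?_
      intro _
      have hid : i ∈ done := by
        rcases H2 i hs with hd | hlt
        · exact hd
        · exact absurd hlt (lt_irrefl i)
      exact ⟨i, hid, rfl, (H3 i hid).2.1⟩
    · have hv := visit_not_mem G h seen hs
      have hj : j < i := (G.wf i j k h).1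
      have hk : k < i := (G.wf i j k h).2
      have H2j : ∀ x ∈ insert i seen, x ∈ done ∨ j < x := by
        intro x hx
        rcases Finset.mem_insert.mp hx with rfl | hx'
        · exact Or.inr hj
        · rcases H2 x hx' with hd | hlt
          · exact Or.inl hd
          · exact Or.inr (hj.trans hlt)
      obtain ⟨d₁, v₁, hd₁, hd₁s, hs₁, hss₁, hag₁, hnw₁, hlo₁, hne₁, hfl₁, h3₁, h4₁, h5₁⟩ :=
        visit_spec G j (insert i seen) done acc intv
          (H1.trans (Finset.subset_insert i seen)) H2j H3 H4 H5
      have H2k : ∀ x ∈ (G.visit j (insert i seen)).2, x ∈ d₁ ∨ k < x := by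
        intro x hx
        rcases hs₁ x hx with hd | ⟨hins, hnd⟩
        · exact Or.inl hd
        · rcases Finset.mem_insert.mp hins with rfl | hx'
          · exact Or.inr hk
          · rcases H2 x hx' with hd' | hlt
            · exact Or.inl (hd₁ hd')
            · exact Or.inr (hk.trans hlt)
      obtain ⟨d₂, v₂, hd₂, hd₂s, hs₂, hss₂, hag₂, hnw₂, hlo₂, hne₂, hfl₂, h3₂, h4₂, h5₂⟩ :=
        visit_spec G k (G.visit j (insert i seen)).2 d₁
          (acc ++ (G.visit j (insert i seen)).1) v₁ hd₁s H2k h3₁ h4₁ h5₁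
      set L₁ := (G.visit j (insert i seen)).1 with hL₁
      set s₁ := (G.visit j (insert i seen)).2 with hs₁def
      set L₂ := (G.visit k s₁).1 with hL₂
      set s₂ := (G.visit k s₁).2 with hs₂def
      have l1pos : 0 < L₁.length := List.length_pos_iff.mpr hne₁
      have l2pos : 0 < L₂.length := List.length_pos_iff.mpr hne₂
      have hid2 : i ∉ d₂ := by
        intro hi
        rcases hnw₂ i hi with h' | h'
        · rcases hnw₁ i h' with h'' | h''
          · exact hs (H1 h'')
          · exact h'' (Finset.mem_insert_self i seen)
        · exact h' (hss₁ (Finset.mem_insert_self i seen))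
      have hiseen : i ∈ s₂ := hss₂ (hss₁ (Finset.mem_insert_self i seen))
      have hlen2 : ((acc ++ L₁) ++ L₂).length = acc.length + L₁.length + L₂.length := by
        simp; omega
      -- agreed value of v₂ on done
      have hagd : ∀ x ∈ done, v₂ x = intv x := by
        intro x hx
        rw [hag₂ x (hd₁ hx), hag₁ x hx]
      -- lower bound for all new intervals
      have hnewlo : ∀ x ∈ d₂, x ∉ done → acc.length ≤ (v₂ x).1 := by
        intro x hx hxd
        by_cases h1 : x ∈ d₁
        · rw [hag₂ x h1]
          exact hlo₁ x h1 hxd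
        · have := hlo₂ x hx h1
          simp only [List.length_append] at this
          omega
      have hub : ∀ x ∈ d₂, (v₂ x).2 < acc.length + L₁.length + L₂.length := by
        intro x hx
        have := (h3₂ x hx).2.1
        rw [hlen2] at this
        exact this
      rw [hv]
      dsimp only
      rw [← List.append_assoc]
      set b := acc.length + L₁.length + L₂.length - 1 with hbdef
      refine ⟨insert i d₂, Function.update v₂ i (acc.length, b),
        ?_, ?_, ?_, ?_, ?_, ?_, ?_, by simp [hne₁], ?_, ?_, ?_, ?_⟩
      · exact fun x hx => Finset.mem_insert_of_mem (hd₂ (hd₁ hx))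
      · exact Finset.insert_subset hiseen hd₂s
      · intro x hx
        rcases hs₂ x hx with h' | ⟨hxs₁, hxd₁⟩
        · exact Or.inl (Finset.mem_insert_of_mem h')
        · rcases hs₁ x hxs₁ with h' | ⟨hxins, hxd⟩
          · exact absurd h' hxd₁
          · rcases Finset.mem_insert.mp hxins with rfl | hxseen
            · exact Or.inl (Finset.mem_insert_self x d₂)
            · exact Or.inr ⟨hxseen, hxd⟩
      · exact fun x hx => hss₂ (hss₁ (Finset.mem_insert_of_mem hx))
      · intro x hx
        have hxi : x ≠ i := fun hxe => hs (hxe ▸ H1 hx)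
        rw [Function.update_of_ne hxi, hagd x hx]
      · intro x hx
        rcases Finset.mem_insert.mp hx with rfl | hx'
        · exact Or.inr hs
        · rcases hnw₂ x hx' with h' | h'
          · rcases hnw₁ x h' with h'' | h''
            · exact Or.inl h''
            · exact Or.inr (fun hc => h'' (Finset.mem_insert_of_mem hc))
          · exact Or.inr (fun hc => h' (hss₁ (Finset.mem_insert_of_mem hc)))
      · intro x hx hxd
        rcases Finset.mem_insert.mp hx with rfl | hx'
        · rw [Function.update_self]
        · have hxi : x ≠ i := fun hxe => hid2 (hxe ▸ hx')
          rw [Function.update_of_ne hxi]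
          exact hnewlo x hx' hxd
      · rw [List.flatten_append, hfl₁, hfl₂, expand_inr G h]
      · -- H3'
        intro x hx
        rcases Finset.mem_insert.mp hx with rfl | hx'
        · rw [Function.update_self]
          refine ⟨by omega, by rw [hlen2]; omega, ?_⟩
          have hb1 : b + 1 = ((acc ++ L₁) ++ L₂).length := by rw [hlen2]; omega
          rw [hb1, List.take_length, List.append_assoc, List.drop_left,
            List.flatten_append, hfl₁, hfl₂, expand_inr G h]
        · have hxi : x ≠ i := fun hxe => hid2 (hxe ▸ hx')
          rw [Function.update_of_ne hxi]
          exact h3₂ x hx'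
      · -- H4'
        intro x hx y hy
        rcases Finset.mem_insert.mp hx with rfl | hx' <;>
          rcases Finset.mem_insert.mp hy with h'' | hy'
        · subst h''
          rw [Function.update_self]
          exact Or.inr (Or.inl ⟨le_rfl, le_rfl⟩)
        · have hyi : y ≠ x := fun hxe => hid2 (hxe ▸ hy')
          rw [Function.update_self, Function.update_of_ne hyi]
          by_cases hyd : y ∈ done
          · have h3y := H3 y hyd
            rw [hagd y hyd]
            exact Or.inl (Or.inr h3y.2.1)
          · refine Or.inr (Or.inl ⟨hnewlo y hy' hyd, ?_⟩)
            have := hub y hy'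
            omega
        · subst h''
          have hxi : x ≠ y := fun hxe => hid2 (hxe ▸ hx')
          rw [Function.update_self, Function.update_of_ne hxi]
          by_cases hxd : x ∈ done
          · have h3x := H3 x hxd
            rw [hagd x hxd]
            exact Or.inl (Or.inl h3x.2.1)
          · refine Or.inr (Or.inr ⟨hnewlo x hx' hxd, ?_⟩)
            have := hub x hx'
            omega
        · have hxi : x ≠ i := fun hxe => hid2 (hxe ▸ hx')
          have hyi : y ≠ i := fun hxe => hid2 (hxe ▸ hy')
          rw [Function.update_of_ne hxi, Function.update_of_ne hyi]
          exact h4₂ x hx' y hy'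
      · -- H5'
        intro k' hk' hlong
        obtain ⟨x, hxd, heq, hlt⟩ := h5₂ k' hk' hlong
        have hxi : x ≠ i := fun hxe => hid2 (hxe ▸ hxd)
        exact ⟨x, Finset.mem_insert_of_mem hxd, heq, by rw [Function.update_of_ne hxi]; exact hlt⟩
termination_by i.val
decreasing_by
  · exact hj
  · exact hk

end SLP

/-- Lemma 2, forward direction: if `F = F_1 ⋯ F_m` is the grammar parsing of `T` with respect
to an SLP `G` producing `T` (in particular the factors concatenate to `T`), then one can
associate to each factor `F_k` of length `> 1` an index interval `[I k .. J k]` with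
`I k < J k < k` such that `F_k = F_{I k} ⋯ F_{J k}`, and any two such intervals are either
disjoint or one is contained in the other. (Indices of factors are 0-based here.) -/
theorem SLP.grammarParsing_spec (G : SLP α) (T : List α) (hT : G.Produces T) :
    G.grammarParsing.flatten = T ∧
    ∃ I J : ℕ → ℕ,
      (∀ k : Fin G.grammarParsing.length, 1 < (G.grammarParsing.get k).length →
        I k < J k ∧ J k < k ∧
        G.grammarParsing.get k = ((G.grammarParsing.take (J k + 1)).drop (I k)).flatten) ∧
      (∀ x y : Fin G.grammarParsing.length,
        1 < (G.grammarParsing.get x).length → 1 < (G.grammarParsing.get y).length →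
        (J x < I y ∨ J y < I x) ∨
        (I x ≤ I y ∧ J y ≤ J x) ∨ (I y ≤ I x ∧ J x ≤ J y)) := by
  classical
  obtain ⟨d, v, -, -, -, -, -, -, -, hne, hfl, h3, h4, h5⟩ :=
    SLP.visit_spec G G.start ∅ ∅ [] (fun _ => (0, 0)) (by simp) (by simp)
      (by simp) (by simp) (by simp)
  simp only [List.nil_append] at h3 h4 h5
  have hGP : G.grammarParsing = (G.visit G.start ∅).1 := rfl
  rw [← hGP] at hfl h3 h5
  refine ⟨hfl.trans hT, ?_⟩
  refine ⟨fun n => (if h : ∃ x, x ∈ d ∧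
      (∃ hn : n < G.grammarParsing.length, G.grammarParsing[n] = G.expand x) ∧ (v x).2 < n
      then v h.choose else (0, 0)).1,
    fun n => (if h : ∃ x, x ∈ d ∧
      (∃ hn : n < G.grammarParsing.length, G.grammarParsing[n] = G.expand x) ∧ (v x).2 < n
      then v h.choose else (0, 0)).2, ?_, ?_⟩
  · intro k hk1
    have hkl := k.isLt
    rw [List.get_eq_getElem] at hk1 ⊢
    obtain ⟨x, hxd, heq, hlt⟩ := h5 k.val hkl hk1
    have hQ : ∃ x, x ∈ d ∧
        (∃ hn : (k : ℕ) < G.grammarParsing.length, G.grammarParsing[(k : ℕ)] = G.expand x) ∧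
        (v x).2 < (k : ℕ) := ⟨x, hxd, ⟨hkl, heq⟩, hlt⟩
    simp only [dif_pos hQ]
    obtain ⟨hcd, hex, hclt⟩ := hQ.choose_spec
    obtain ⟨hn2, hceq⟩ := hex
    obtain ⟨hab, hbl, hfleq⟩ := h3 _ hcd
    exact ⟨hab, hclt, hceq.trans hfleq.symm⟩
  · intro x y hx1 hy1
    rw [List.get_eq_getElem] at hx1 hy1
    obtain ⟨a, had, haeq, halt⟩ := h5 x.val x.isLt hx1
    obtain ⟨b, hbd, hbeq, hblt⟩ := h5 y.val y.isLt hy1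
    have hQx : ∃ z, z ∈ d ∧
        (∃ hn : (x : ℕ) < G.grammarParsing.length, G.grammarParsing[(x : ℕ)] = G.expand z) ∧
        (v z).2 < (x : ℕ) := ⟨a, had, ⟨x.isLt, haeq⟩, halt⟩
    have hQy : ∃ z, z ∈ d ∧
        (∃ hn : (y : ℕ) < G.grammarParsing.length, G.grammarParsing[(y : ℕ)] = G.expand z) ∧
        (v z).2 < (y : ℕ) := ⟨b, hbd, ⟨y.isLt, hbeq⟩, hblt⟩
    simp only [dif_pos hQx, dif_pos hQy]
    exact h4 _ hQx.choose_spec.1 _ hQy.choose_spec.1
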